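/- First modular identity for the Jacobi theta function θ₁ (real form): for every real t > 0 and every real z, √t · ∑_{n=0}^∞ (-1)^n · exp(-πt(n+1/2)²) · sin((2n+1)z) = exp(-z²/(πt)) · ∑_{n=0}^∞ (-1)^n · exp(-(π/t)(n+1/2)²) · sinh((2n+1)z/t). -/

import Mathlib

open Real

open Complex in
private lemma theta1_pair (τ ζ : ℂ) (n : ℕ) :
    cexp (π * I * τ / 4 + I * ζ) * jacobiTheta₂_term (n : ℤ) ((τ + 1) / 2 + ζ / π) τ
      + cexp (π * I * τ / 4 + I * ζ) * jacobiTheta₂_term (-((n : ℤ) + 1)) ((τ + 1) / 2 + ζ / π) τ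
    = (-1 : ℂ) ^ n * cexp (π * I * τ * ((n : ℂ) + 1 / 2) ^ 2) *
        (cexp ((2 * (n : ℂ) + 1) * I * ζ) - cexp (-((2 * (n : ℂ) + 1) * I * ζ))) := by
  have hπ : (π : ℂ) ≠ 0 := Complex.ofReal_ne_zero.mpr Real.pi_ne_zero
  simp only [jacobiTheta₂_term, ← Complex.exp_add]
  have h1 : π * I * τ / 4 + I * ζ + (2 * π * I * ((n : ℤ) : ℂ) * ((τ + 1) / 2 + ζ / π)
        + π * I * ((n : ℤ) : ℂ) ^ 2 * τ)
      = π * I * τ * ((n : ℂ) + 1 / 2) ^ 2 + (2 * (n : ℂ) + 1) * I * ζ + (n : ℂ) * (π * I) := by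
    push_cast
    field_simp
    ring
  have h2 : π * I * τ / 4 + I * ζ + (2 * π * I * ((-((n : ℤ) + 1) : ℤ) : ℂ) * ((τ + 1) / 2 + ζ / π)
        + π * I * ((-((n : ℤ) + 1) : ℤ) : ℂ) ^ 2 * τ)
      = (π * I * τ * ((n : ℂ) + 1 / 2) ^ 2 + (-((2 * (n : ℂ) + 1) * I * ζ))
          + ((n : ℂ) + 1) * (π * I)) + ((-((n : ℤ) + 1) : ℤ) : ℂ) * (2 * π * I) := by
    push_cast
    field_simp
    ring
  rw [h1, h2]
  simp only [Complex.exp_add, Complex.exp_int_mul, Complex.exp_two_pi_mul_I, one_zpow, mul_one,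
    show ((n : ℂ) + 1) * (π * I) = ((n : ℕ) + 1 : ℕ) * (π * I) by push_cast; ring,
    show (n : ℂ) * (π * I) = ((n : ℕ) : ℕ) * (π * I) by norm_num,
    Complex.exp_nat_mul, Complex.exp_pi_mul_I, pow_succ]
  ring

open Complex in
private lemma theta1_sum (τ ζ : ℂ) (hτ : 0 < τ.im) :
    cexp (π * I * τ / 4 + I * ζ) * jacobiTheta₂ ((τ + 1) / 2 + ζ / π) τ
    = ∑' n : ℕ, (-1 : ℂ) ^ n * cexp (π * I * τ * ((n : ℂ) + 1 / 2) ^ 2) *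
        (cexp ((2 * (n : ℂ) + 1) * I * ζ) - cexp (-((2 * (n : ℂ) + 1) * I * ζ))) := by
  have hs : Summable (fun k : ℤ => jacobiTheta₂_term k ((τ + 1) / 2 + ζ / π) τ) :=
    (summable_jacobiTheta₂_term_iff _ _).mpr hτ
  rw [jacobiTheta₂, ← tsum_mul_left, ← tsum_nat_add_neg_add_one (hs.mul_left _)]
  exact tsum_congr fun n => theta1_pair τ ζ n

open Complex in
/-- First modular identity for the Jacobi theta function `θ₁`, real form. -/
theorem theta1_modular (t z : ℝ) (ht : 0 < t) :
    Real.sqrt t *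
      ∑' n : ℕ, (-1 : ℝ) ^ n * Real.exp (-π * t * ((n : ℝ) + 1 / 2) ^ 2) *
        Real.sin ((2 * (n : ℝ) + 1) * z)
    = Real.exp (-z ^ 2 / (π * t)) *
      ∑' n : ℕ, (-1 : ℝ) ^ n * Real.exp (-(π / t) * ((n : ℝ) + 1 / 2) ^ 2) *
        Real.sinh ((2 * (n : ℝ) + 1) * z / t) := by
  have hπ : (π : ℂ) ≠ 0 := Complex.ofReal_ne_zero.mpr Real.pi_ne_zero
  have ht0 : (t : ℂ) ≠ 0 := Complex.ofReal_ne_zero.mpr ht.ne'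
  set τ : ℂ := (t : ℂ) * I with hτdef
  set τ' : ℂ := I / (t : ℂ) with hτ'def
  set ζ' : ℂ := -(I * (z : ℂ)) / t with hζ'def
  have hτim : 0 < τ.im := by simp [hτdef, ht]
  have hτ'im : 0 < τ'.im := by
    rw [hτ'def, div_eq_mul_inv, ← Complex.ofReal_inv]
    simpa using inv_pos.mpr ht
  have hτ0 : τ ≠ 0 := by
    intro h; rw [h] at hτim; simp at hτim
  -- complex version of the LHS series
  have hA : cexp (π * I * τ / 4 + I * (z : ℂ)) * jacobiTheta₂ ((τ + 1) / 2 + (z : ℂ) / π) τ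
      = 2 * I * ((∑' n : ℕ, (-1 : ℝ) ^ n * Real.exp (-π * t * ((n : ℝ) + 1 / 2) ^ 2) *
          Real.sin ((2 * (n : ℝ) + 1) * z) : ℝ) : ℂ) := by
    rw [theta1_sum τ (z : ℂ) hτim, Complex.ofReal_tsum, ← tsum_mul_left]
    refine tsum_congr fun n => ?_
    have e1 : cexp (π * I * τ * ((n : ℂ) + 1 / 2) ^ 2)
        = ((Real.exp (-π * t * ((n : ℝ) + 1 / 2) ^ 2) : ℝ) : ℂ) := by
      rw [Complex.ofReal_exp]
      congr 1
      push_cast [hτdef]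
      linear_combination (π : ℂ) * t * ((n : ℂ) + 1 / 2) ^ 2 * Complex.I_sq
    have e2 : cexp ((2 * (n : ℂ) + 1) * I * (z : ℂ)) - cexp (-((2 * (n : ℂ) + 1) * I * (z : ℂ)))
        = 2 * I * ((Real.sin ((2 * (n : ℝ) + 1) * z) : ℝ) : ℂ) := by
      rw [Complex.ofReal_sin, Complex.sin]
      have harg : (2 * (n : ℂ) + 1) * I * (z : ℂ) = (((2 * (n : ℝ) + 1) * z : ℝ) : ℂ) * I := by
        push_cast; ring
      rw [harg]
      simp only [neg_mul]
      linear_combination (cexp ((((2 * (n : ℝ) + 1) * z : ℝ) : ℂ) * I)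
        - cexp (-((((2 * (n : ℝ) + 1) * z : ℝ) : ℂ) * I))) * Complex.I_sq
    rw [e1, e2]
    push_cast
    ring
  -- complex version of the RHS series
  have hB : cexp (π * I * τ' / 4 + I * ζ') * jacobiTheta₂ ((τ' + 1) / 2 + ζ' / π) τ'
      = 2 * ((∑' n : ℕ, (-1 : ℝ) ^ n * Real.exp (-(π / t) * ((n : ℝ) + 1 / 2) ^ 2) *
          Real.sinh ((2 * (n : ℝ) + 1) * z / t) : ℝ) : ℂ) := by
    rw [theta1_sum τ' ζ' hτ'im, Complex.ofReal_tsum, ← tsum_mul_left]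
    refine tsum_congr fun n => ?_
    have e1 : cexp (π * I * τ' * ((n : ℂ) + 1 / 2) ^ 2)
        = ((Real.exp (-(π / t) * ((n : ℝ) + 1 / 2) ^ 2) : ℝ) : ℂ) := by
      rw [Complex.ofReal_exp]
      congr 1
      push_cast [hτ'def]
      field_simp
      linear_combination (2 * (n : ℂ) + 1) ^ 2 * Complex.I_sq
    have harg : (2 * (n : ℂ) + 1) * I * ζ' = (((2 * (n : ℝ) + 1) * z / t : ℝ) : ℂ) := by
      rw [hζ'def]
      push_cast
      field_simp
      linear_combination -((2 * (n : ℂ) + 1) * (z : ℂ)) * Complex.I_sq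
    have e2 : cexp ((2 * (n : ℂ) + 1) * I * ζ') - cexp (-((2 * (n : ℂ) + 1) * I * ζ'))
        = 2 * ((Real.sinh ((2 * (n : ℝ) + 1) * z / t) : ℝ) : ℂ) := by
      rw [Complex.ofReal_sinh, Complex.sinh, harg]
      ring
    rw [e1, e2]
    push_cast
    ring
  -- the key complex identity
  have hτ'eq : -1 / τ = τ' := by
    rw [hτdef, hτ'def]
    field_simp
    linear_combination (-1 : ℂ) * Complex.I_sq
  have hdiv : ((τ + 1) / 2 + (z : ℂ) / π) / τ = ((τ' + 1) / 2 + ζ' / π) - τ' := by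
    rw [hτdef, hτ'def, hζ'def]
    field_simp
    linear_combination ((π : ℂ) + 2 * (z : ℂ)) * Complex.I_sq
  have hq : jacobiTheta₂ ((τ' + 1) / 2 + ζ' / π) τ'
      = cexp (-π * I * (τ' + 2 * (((τ' + 1) / 2 + ζ' / π) - τ'))) *
          jacobiTheta₂ (((τ' + 1) / 2 + ζ' / π) - τ') τ' := by
    have h := jacobiTheta₂_add_left' (((τ' + 1) / 2 + ζ' / π) - τ') τ'
    rw [sub_add_cancel] at h
    exact h
  have hI : cexp ((π : ℂ) / 2 * I) = I := by
    rw [show (π : ℂ) / 2 * I = ((π / 2 : ℝ) : ℂ) * I by push_cast; ring, Complex.exp_mul_I]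
    simp [← Complex.ofReal_cos, ← Complex.ofReal_sin]
  have hsqrtC : ((Real.sqrt t : ℝ) : ℂ) = (t : ℂ) ^ (1 / 2 : ℂ) := by
    rw [show ((1 : ℂ) / 2) = ((1 / 2 : ℝ) : ℂ) by norm_num, ← Complex.ofReal_cpow ht.le,
      Real.sqrt_eq_rpow]
  have hsqrt0 : ((Real.sqrt t : ℝ) : ℂ) ≠ 0 :=
    Complex.ofReal_ne_zero.mpr (Real.sqrt_pos.mpr ht).ne'
  have hscalar : cexp (π * I * τ / 4 + I * (z : ℂ)) *
        cexp (-π * I * ((τ + 1) / 2 + (z : ℂ) / π) ^ 2 / τ)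
      = ((Real.exp (-z ^ 2 / (π * t)) : ℝ) : ℂ) * cexp ((π : ℂ) / 2 * I) *
          cexp (π * I * τ' / 4 + I * ζ') *
        cexp (-π * I * (τ' + 2 * (((τ' + 1) / 2 + ζ' / π) - τ'))) := by
    rw [Complex.ofReal_exp, ← Complex.exp_add, ← Complex.exp_add, ← Complex.exp_add,
      ← Complex.exp_add]
    congr 1
    rw [hτdef, hτ'def, hζ'def]
    push_cast
    field_simp [Complex.I_ne_zero]
    have hh : (π : ℂ) * ((π : ℂ))⁻¹ * (t : ℂ) ^ 4 * (((t : ℂ))⁻¹) ^ 4 = 1 := by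
      field_simp
    linear_combination (-16 * (π : ℂ) * (z : ℂ) - 4 * (π : ℂ) ^ 2) * Complex.I_sq
  have hkey : ((Real.sqrt t : ℝ) : ℂ) *
      (cexp (π * I * τ / 4 + I * (z : ℂ)) * jacobiTheta₂ ((τ + 1) / 2 + (z : ℂ) / π) τ)
      = ((Real.exp (-z ^ 2 / (π * t)) : ℝ) : ℂ) * I *
        (cexp (π * I * τ' / 4 + I * ζ') * jacobiTheta₂ ((τ' + 1) / 2 + ζ' / π) τ') := by
    rw [hI] at hscalar
    rw [jacobiTheta₂_functional_equation ((τ + 1) / 2 + (z : ℂ) / π) τ, hτ'eq, hdiv, hq]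
    have hct : -Complex.I * τ = (t : ℂ) := by
      rw [hτdef]; linear_combination (-(t : ℂ)) * Complex.I_sq
    rw [hct, ← hsqrtC]
    have hcan : ((Real.sqrt t : ℝ) : ℂ) * (1 / ((Real.sqrt t : ℝ) : ℂ)) = 1 := by
      field_simp
    linear_combination ((1 / ((Real.sqrt t : ℝ) : ℂ)) * ((Real.sqrt t : ℝ) : ℂ) *
        jacobiTheta₂ ((τ' + 1) / 2 + ζ' / π - τ') τ') * hscalar
      + (((Real.exp (-z ^ 2 / (π * t)) : ℝ) : ℂ) * I * cexp (π * I * τ' / 4 + I * ζ') *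
          cexp (-π * I * (τ' + 2 * (((τ' + 1) / 2 + ζ' / π) - τ'))) *
          jacobiTheta₂ ((τ' + 1) / 2 + ζ' / π - τ') τ') * hcan
  rw [hA, hB] at hkey
  apply Complex.ofReal_injective
  rw [Complex.ofReal_mul, Complex.ofReal_mul]
  apply mul_left_cancel₀ (mul_ne_zero two_ne_zero Complex.I_ne_zero)
  linear_combination hkey
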